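/- Let X be a third-order real tensor of size I₁ × I₂ × I₃ and for n = 1, 2, 3 let P_n ∈ ℝ^{I_n × I_n} be orthogonal projection matrices (P_n² = P_n = P_nᵀ). Then ‖X − X ×₁ P₁ ×₂ P₂ ×₃ P₃‖_F² ≤ Σ_{n=1}^{3} ‖X − X ×_n P_n‖_F². -/
import Mathlib


open Matrix

/-- Mode-1 product of a third-order tensor with a matrix `A ∈ ℝ^{J × I₁}`. -/
def mode1Prod {I₁ I₂ I₃ J : ℕ} (X : Fin I₁ → Fin I₂ → Fin I₃ → ℝ)
    (A : Matrix (Fin J) (Fin I₁) ℝ) : Fin J → Fin I₂ → Fin I₃ → ℝ :=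
  fun j i₂ i₃ => ∑ i₁, X i₁ i₂ i₃ * A j i₁

/-- Mode-2 product of a third-order tensor with a matrix `A ∈ ℝ^{J × I₂}`. -/
def mode2Prod {I₁ I₂ I₃ J : ℕ} (X : Fin I₁ → Fin I₂ → Fin I₃ → ℝ)
    (A : Matrix (Fin J) (Fin I₂) ℝ) : Fin I₁ → Fin J → Fin I₃ → ℝ :=
  fun i₁ j i₃ => ∑ i₂, X i₁ i₂ i₃ * A j i₂

/-- Mode-3 product of a third-order tensor with a matrix `A ∈ ℝ^{J × I₃}`. -/
def mode3Prod {I₁ I₂ I₃ J : ℕ} (X : Fin I₁ → Fin I₂ → Fin I₃ → ℝ)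
    (A : Matrix (Fin J) (Fin I₃) ℝ) : Fin I₁ → Fin I₂ → Fin J → ℝ :=
  fun i₁ i₂ j => ∑ i₃, X i₁ i₂ i₃ * A j i₃

/-- **Projection error bound for multilinear projections.**
If `P₁, P₂, P₃` are orthogonal projection matrices, then
`‖X − X ×₁ P₁ ×₂ P₂ ×₃ P₃‖_F² ≤ Σ_{n=1}^{3} ‖X − X ×ₙ Pₙ‖_F²`. -/
private lemma vec_ortho {n : ℕ} (P : Matrix (Fin n) (Fin n) ℝ)
    (h1 : P * P = P) (h2 : Pᵀ = P) (s t : Fin n → ℝ) :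
    ∑ i, (∑ k, s k * P i k) * (t i - ∑ k, t k * P i k) = 0 := by
  have hsym : ∀ i k, P i k = P k i := fun i k =>
    (Matrix.transpose_apply P k i).symm.trans (congrFun (congrFun h2 k) i)
  have hidem : ∀ k l, (∑ i, P k i * P i l) = P k l := fun k l => by
    have := congrFun (congrFun h1 k) l
    simpa [Matrix.mul_apply] using this
  have e1 : ∑ i, (∑ k, s k * P i k) * t i = ∑ k, ∑ l, s k * t l * P k l := by
    simp_rw [Finset.sum_mul]
    rw [Finset.sum_comm]
    apply Finset.sum_congr rfl; intro k _
    apply Finset.sum_congr rfl; intro i _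
    rw [hsym i k]; ring
  have e2 : ∑ i, (∑ k, s k * P i k) * (∑ l, t l * P i l)
      = ∑ k, ∑ l, s k * t l * P k l := by
    simp_rw [Finset.sum_mul, Finset.mul_sum]
    rw [Finset.sum_comm]
    apply Finset.sum_congr rfl; intro k _
    have : ∀ i, ∑ l, s k * P i k * (t l * P i l) = ∑ l, (s k * t l) * (P k i * P i l) := by
      intro i
      apply Finset.sum_congr rfl; intro l _
      rw [hsym i k]; ring
    simp_rw [this]
    rw [Finset.sum_comm]
    apply Finset.sum_congr rfl; intro l _
    rw [← Finset.mul_sum, hidem k l]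
  simp_rw [mul_sub, Finset.sum_sub_distrib, e1, e2, sub_self]

private lemma vec_contract {n : ℕ} (P : Matrix (Fin n) (Fin n) ℝ)
    (h1 : P * P = P) (h2 : Pᵀ = P) (s : Fin n → ℝ) :
    ∑ i, (∑ k, s k * P i k) ^ 2 ≤ ∑ i, (s i) ^ 2 := by
  have ho := vec_ortho P h1 h2 s s
  have hexp : ∑ i, (s i - ∑ k, s k * P i k) ^ 2
      = ∑ i, ((s i)^2 - (∑ k, s k * P i k)^2
        - 2 * ((∑ k, s k * P i k) * (s i - ∑ k, s k * P i k))) := by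
    apply Finset.sum_congr rfl; intro i _; ring
  have hnn : (0:ℝ) ≤ ∑ i, (s i - ∑ k, s k * P i k) ^ 2 :=
    Finset.sum_nonneg fun i _ => sq_nonneg _
  rw [hexp] at hnn
  simp_rw [Finset.sum_sub_distrib, ← Finset.mul_sum, ho, mul_zero, sub_zero] at hnn
  linarith

section TensorLemmas
variable {I₁ I₂ I₃ : ℕ}

private lemma t1_ortho (P : Matrix (Fin I₁) (Fin I₁) ℝ) (h1 : P * P = P) (h2 : Pᵀ = P)
    (S T : Fin I₁ → Fin I₂ → Fin I₃ → ℝ) :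
    ∑ i₁, ∑ i₂, ∑ i₃,
      mode1Prod S P i₁ i₂ i₃ * (T i₁ i₂ i₃ - mode1Prod T P i₁ i₂ i₃) = 0 := by
  rw [Finset.sum_comm]
  apply Finset.sum_eq_zero; intro i₂ _
  rw [Finset.sum_comm]
  apply Finset.sum_eq_zero; intro i₃ _
  exact vec_ortho P h1 h2 (fun k => S k i₂ i₃) (fun k => T k i₂ i₃)

private lemma t2_ortho (P : Matrix (Fin I₂) (Fin I₂) ℝ) (h1 : P * P = P) (h2 : Pᵀ = P)
    (S T : Fin I₁ → Fin I₂ → Fin I₃ → ℝ) :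
    ∑ i₁, ∑ i₂, ∑ i₃,
      mode2Prod S P i₁ i₂ i₃ * (T i₁ i₂ i₃ - mode2Prod T P i₁ i₂ i₃) = 0 := by
  apply Finset.sum_eq_zero; intro i₁ _
  rw [Finset.sum_comm]
  apply Finset.sum_eq_zero; intro i₃ _
  exact vec_ortho P h1 h2 (fun k => S i₁ k i₃) (fun k => T i₁ k i₃)

private lemma t1_contract (P : Matrix (Fin I₁) (Fin I₁) ℝ) (h1 : P * P = P) (h2 : Pᵀ = P)
    (S : Fin I₁ → Fin I₂ → Fin I₃ → ℝ) :
    ∑ i₁, ∑ i₂, ∑ i₃, (mode1Prod S P i₁ i₂ i₃) ^ 2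
      ≤ ∑ i₁, ∑ i₂, ∑ i₃, (S i₁ i₂ i₃) ^ 2 := by
  conv_lhs => rw [Finset.sum_comm]
  conv_rhs => rw [Finset.sum_comm]
  apply Finset.sum_le_sum; intro i₂ _
  conv_lhs => rw [Finset.sum_comm]
  conv_rhs => rw [Finset.sum_comm]
  apply Finset.sum_le_sum; intro i₃ _
  exact vec_contract P h1 h2 (fun k => S k i₂ i₃)

private lemma t2_contract (P : Matrix (Fin I₂) (Fin I₂) ℝ) (h1 : P * P = P) (h2 : Pᵀ = P)
    (S : Fin I₁ → Fin I₂ → Fin I₃ → ℝ) :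
    ∑ i₁, ∑ i₂, ∑ i₃, (mode2Prod S P i₁ i₂ i₃) ^ 2
      ≤ ∑ i₁, ∑ i₂, ∑ i₃, (S i₁ i₂ i₃) ^ 2 := by
  apply Finset.sum_le_sum; intro i₁ _
  conv_lhs => rw [Finset.sum_comm]
  conv_rhs => rw [Finset.sum_comm]
  apply Finset.sum_le_sum; intro i₃ _
  exact vec_contract P h1 h2 (fun k => S i₁ k i₃)

/-- commutation of mode-1 and mode-2 products -/
private lemma comm12 (P : Matrix (Fin I₁) (Fin I₁) ℝ) (Q : Matrix (Fin I₂) (Fin I₂) ℝ)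
    (W : Fin I₁ → Fin I₂ → Fin I₃ → ℝ) :
    mode2Prod (mode1Prod W P) Q = mode1Prod (mode2Prod W Q) P := by
  funext i₁ i₂ i₃
  simp only [mode1Prod, mode2Prod, Finset.sum_mul]
  rw [Finset.sum_comm]
  exact Finset.sum_congr rfl fun a _ => Finset.sum_congr rfl fun b _ => by ring

end TensorLemmas

theorem multilinear_projection_error_bound (I₁ I₂ I₃ : ℕ)
    (X : Fin I₁ → Fin I₂ → Fin I₃ → ℝ)
    (P₁ : Matrix (Fin I₁) (Fin I₁) ℝ) (P₂ : Matrix (Fin I₂) (Fin I₂) ℝ)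
    (P₃ : Matrix (Fin I₃) (Fin I₃) ℝ)
    (hP₁idem : P₁ * P₁ = P₁) (hP₁symm : P₁ᵀ = P₁)
    (hP₂idem : P₂ * P₂ = P₂) (hP₂symm : P₂ᵀ = P₂)
    (hP₃idem : P₃ * P₃ = P₃) (hP₃symm : P₃ᵀ = P₃) :
    ∑ i₁, ∑ i₂, ∑ i₃,
      (X i₁ i₂ i₃ - mode3Prod (mode2Prod (mode1Prod X P₁) P₂) P₃ i₁ i₂ i₃) ^ 2
    ≤ (∑ i₁, ∑ i₂, ∑ i₃, (X i₁ i₂ i₃ - mode1Prod X P₁ i₁ i₂ i₃) ^ 2) +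
      (∑ i₁, ∑ i₂, ∑ i₃, (X i₁ i₂ i₃ - mode2Prod X P₂ i₁ i₂ i₃) ^ 2) +
      (∑ i₁, ∑ i₂, ∑ i₃, (X i₁ i₂ i₃ - mode3Prod X P₃ i₁ i₂ i₃) ^ 2) := by
  -- the three error pieces
  set A : Fin I₁ → Fin I₂ → Fin I₃ → ℝ :=
    fun a b c => X a b c - mode1Prod X P₁ a b c with hA
  set S : Fin I₁ → Fin I₂ → Fin I₃ → ℝ :=
    fun a b c => X a b c - mode2Prod X P₂ a b c with hS
  set Z : Fin I₁ → Fin I₂ → Fin I₃ → ℝ :=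
    fun a b c => X a b c - mode3Prod X P₃ a b c with hZ
  set B : Fin I₁ → Fin I₂ → Fin I₃ → ℝ := mode1Prod S P₁ with hB
  set C : Fin I₁ → Fin I₂ → Fin I₃ → ℝ := mode2Prod (mode1Prod Z P₁) P₂ with hC
  -- pointwise decomposition
  have hdecomp : ∀ i₁ i₂ i₃,
      X i₁ i₂ i₃ - mode3Prod (mode2Prod (mode1Prod X P₁) P₂) P₃ i₁ i₂ i₃
        = A i₁ i₂ i₃ + B i₁ i₂ i₃ + C i₁ i₂ i₃ := by
    intro i₁ i₂ i₃
    simp only [hA, hB, hC, hS, hZ,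
      mode1Prod, mode2Prod, mode3Prod, sub_mul, Finset.sum_sub_distrib,
      Finset.sum_mul]
    have h1 : (∑ a : Fin I₁, ∑ b : Fin I₂, X a b i₃ * P₂ i₂ b * P₁ i₁ a)
        = ∑ b : Fin I₂, ∑ a : Fin I₁, X a b i₃ * P₁ i₁ a * P₂ i₂ b := by
      rw [Finset.sum_comm]
      exact Finset.sum_congr rfl fun b _ => Finset.sum_congr rfl fun a _ => by ring
    have h2 : (∑ c : Fin I₃, ∑ b : Fin I₂, ∑ a : Fin I₁,
          X a b c * P₁ i₁ a * P₂ i₂ b * P₃ i₃ c)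
        = ∑ b : Fin I₂, ∑ a : Fin I₁, ∑ c : Fin I₃,
          X a b c * P₃ i₃ c * P₁ i₁ a * P₂ i₂ b := by
      rw [Finset.sum_comm]
      refine Finset.sum_congr rfl fun b _ => ?_
      rw [Finset.sum_comm]
      exact Finset.sum_congr rfl fun a _ => Finset.sum_congr rfl fun c _ => by ring
    rw [h1, h2]
    ring
  -- expansion of the square
  have hsplit :
      (∑ i₁, ∑ i₂, ∑ i₃,
        (X i₁ i₂ i₃ - mode3Prod (mode2Prod (mode1Prod X P₁) P₂) P₃ i₁ i₂ i₃) ^ 2)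
      = (∑ i₁, ∑ i₂, ∑ i₃, (A i₁ i₂ i₃)^2)
        + (∑ i₁, ∑ i₂, ∑ i₃, (B i₁ i₂ i₃)^2)
        + (∑ i₁, ∑ i₂, ∑ i₃, (C i₁ i₂ i₃)^2)
        + 2 * (∑ i₁, ∑ i₂, ∑ i₃, B i₁ i₂ i₃ * A i₁ i₂ i₃)
        + 2 * (∑ i₁, ∑ i₂, ∑ i₃, C i₁ i₂ i₃ * A i₁ i₂ i₃)
        + 2 * (∑ i₁, ∑ i₂, ∑ i₃, C i₁ i₂ i₃ * B i₁ i₂ i₃) := by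
    simp_rw [hdecomp]
    simp_rw [show ∀ a b c : ℝ, (a + b + c)^2
        = a^2 + b^2 + c^2 + 2*(b*a) + 2*(c*a) + 2*(c*b) from fun a b c => by ring,
      Finset.sum_add_distrib, ← Finset.mul_sum]
  have hBA : (∑ i₁, ∑ i₂, ∑ i₃, B i₁ i₂ i₃ * A i₁ i₂ i₃) = 0 := by
    rw [hB, hA]
    exact t1_ortho P₁ hP₁idem hP₁symm S X
  have hCA : (∑ i₁, ∑ i₂, ∑ i₃, C i₁ i₂ i₃ * A i₁ i₂ i₃) = 0 := by
    rw [hC, hA, comm12]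
    exact t1_ortho P₁ hP₁idem hP₁symm (mode2Prod Z P₂) X
  have hCB : (∑ i₁, ∑ i₂, ∑ i₃, C i₁ i₂ i₃ * B i₁ i₂ i₃) = 0 := by
    have hBalt : B = fun a b c => mode1Prod X P₁ a b c
        - mode2Prod (mode1Prod X P₁) P₂ a b c := by
      rw [hB, hS]
      funext a b c
      simp only [mode1Prod, mode2Prod, sub_mul, Finset.sum_sub_distrib, Finset.sum_mul]
      congr 1
      rw [Finset.sum_comm]
      exact Finset.sum_congr rfl fun i _ => Finset.sum_congr rfl fun j _ => by ring
    rw [hC, hBalt]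
    exact t2_ortho P₂ hP₂idem hP₂symm (mode1Prod Z P₁) (mode1Prod X P₁)
  have hBle : (∑ i₁, ∑ i₂, ∑ i₃, (B i₁ i₂ i₃)^2)
      ≤ ∑ i₁, ∑ i₂, ∑ i₃, (S i₁ i₂ i₃)^2 := by
    rw [hB]; exact t1_contract P₁ hP₁idem hP₁symm S
  have hCle : (∑ i₁, ∑ i₂, ∑ i₃, (C i₁ i₂ i₃)^2)
      ≤ ∑ i₁, ∑ i₂, ∑ i₃, (Z i₁ i₂ i₃)^2 := by
    rw [hC]
    exact le_trans (t2_contract P₂ hP₂idem hP₂symm (mode1Prod Z P₁))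
      (t1_contract P₁ hP₁idem hP₁symm Z)
  rw [hsplit, hBA, hCA, hCB]
  simp only [mul_zero, add_zero]
  have : (∑ i₁, ∑ i₂, ∑ i₃, (X i₁ i₂ i₃ - mode1Prod X P₁ i₁ i₂ i₃) ^ 2)
      = ∑ i₁, ∑ i₂, ∑ i₃, (A i₁ i₂ i₃)^2 := rfl
  linarith
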